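/- A Lebesgue measurable set A ⊆ ℝ is closed and discrete in the I-sparse set topology if and only if λ(A) = 0. Precisely: λ(A) = 0 if and only if ℝ \ A ∈ 𝒰 and A has no limit points in (ℝ, 𝒰), i.e. for every x ∈ ℝ there exists U ∈ 𝒰 with x ∈ U and U ∩ (A \ {x}) = ∅. -/

import Mathlib

open MeasureTheory Filter Set
open scoped ENNReal
open Metric Topology

noncomputable section

/-- A nontrivial admissible ideal of subsets of ℕ: closed under subsets and
finite unions, contains every finite set, and does not contain ℕ itself. -/
structure AdmissibleIdeal : Type where
  carrier : Set (Set ℕ)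
  subset_mem : ∀ ⦃A B : Set ℕ⦄, A ∈ carrier → B ⊆ A → B ∈ carrier
  union_mem : ∀ ⦃A B : Set ℕ⦄, A ∈ carrier → B ∈ carrier → A ∪ B ∈ carrier
  finite_mem : ∀ A : Set ℕ, A.Finite → A ∈ carrier
  univ_not_mem : (Set.univ : Set ℕ) ∉ carrier

/-- The filter F(I) = {M ⊆ ℕ : ℕ \ M ∈ I} associated with the ideal I. -/
def AdmissibleIdeal.filter (I : AdmissibleIdeal) : Filter ℕ :=
  Filter.comk (· ∈ I.carrier) (I.finite_mem ∅ Set.finite_empty)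
    (fun _t ht _s hs => I.subset_mem ht hs)
    (fun _s hs _t ht => I.union_mem hs ht)

/-- A sequence of closed intervals admissible about the point `p`:
each `J n` is a closed interval containing `p`, and
`{n : 0 < λ(J n) < 1/n} ∈ F(I)`. -/
def AdmissibleSeq (I : AdmissibleIdeal) (p : ℝ) (J : ℕ → Set ℝ) : Prop :=
  (∀ n, ∃ a b : ℝ, a ≤ b ∧ J n = Set.Icc a b) ∧ (∀ n, p ∈ J n) ∧
    {n : ℕ | 0 < volume (J n) ∧ volume (J n) < (n : ℝ≥0∞)⁻¹} ∈ I.filter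

/-- The sequence n ↦ λ(E ∩ J n)/λ(J n) (interpreted as 0 when λ(J n) = 0). -/
def ratioSeq (E : Set ℝ) (J : ℕ → Set ℝ) : ℕ → ℝ :=
  fun n => (volume (E ∩ J n) / volume (J n)).toReal

/-- Upper I-density of `E` at `p`: sup over admissible sequences of the
limsup along `F(I)` of the measure ratios. -/
def upperIDensity (I : AdmissibleIdeal) (p : ℝ) (E : Set ℝ) : ℝ :=
  sSup {l : ℝ | ∃ J : ℕ → Set ℝ, AdmissibleSeq I p J ∧
    l = Filter.limsup (ratioSeq E J) I.filter}

/-- Lower I-density of `E` at `p`: inf over admissible sequences of the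
liminf along `F(I)` of the measure ratios. -/
def lowerIDensity (I : AdmissibleIdeal) (p : ℝ) (E : Set ℝ) : ℝ :=
  sInf {l : ℝ | ∃ J : ℕ → Set ℝ, AdmissibleSeq I p J ∧
    l = Filter.liminf (ratioSeq E J) I.filter}

/-- `C` is a measurable cover of `A`. -/
def IsMeasurableCover (C A : Set ℝ) : Prop :=
  MeasurableSet C ∧ A ⊆ C ∧
    ∀ F : Set ℝ, MeasurableSet F → F ⊆ C \ A → volume F = 0

/-- `A` is I-sparse at `x`, i.e. `A ∈ S_I(x)`. -/
def ISparseAt (I : AdmissibleIdeal) (A : Set ℝ) (x : ℝ) : Prop :=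
  ∀ B : Set ℝ, MeasurableSet B → upperIDensity I x B < 1 →
    ∀ C : Set ℝ, IsMeasurableCover C A → upperIDensity I x (C ∪ B) < 1

/-- The I-density topology T_I. -/
def IDensityTopology (I : AdmissibleIdeal) : Set (Set ℝ) :=
  {E | MeasurableSet E ∧ ∀ x ∈ E, lowerIDensity I x E = 1}

/-- The I-sparse set topology 𝒰. -/
def sparseTop (I : AdmissibleIdeal) : Set (Set ℝ) :=
  {E | ∀ x ∈ E, ISparseAt I Eᶜ x}

lemma filter_neBot (I : AdmissibleIdeal) : I.filter.NeBot := by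
  refine Filter.neBot_iff.mpr (fun h => I.univ_not_mem ?_)
  have : (∅ : Set ℕ) ∈ I.filter := by rw [h]; exact Filter.mem_bot
  simpa [AdmissibleIdeal.filter, Filter.mem_comk] using this

lemma filter_le_atTop (I : AdmissibleIdeal) : I.filter ≤ atTop := by
  rw [← Nat.cofinite_eq_atTop]
  intro s hs
  have : sᶜ.Finite := hs
  simpa [AdmissibleIdeal.filter, Filter.mem_comk] using I.finite_mem _ this

def rseq (n : ℕ) : ℝ := (4 * (n : ℝ) + 4)⁻¹

lemma rseq_pos (n : ℕ) : 0 < rseq n := by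
  have : (0:ℝ) < 4 * (n:ℝ) + 4 := by positivity
  exact inv_pos.mpr this

def Jseq (p : ℝ) (n : ℕ) : Set ℝ := Set.Icc (p - rseq n) (p + rseq n)

lemma vol_Jseq (p : ℝ) (n : ℕ) : volume (Jseq p n) = ENNReal.ofReal (2 * rseq n) := by
  rw [Jseq, Real.volume_Icc]; congr 1; ring

lemma admissible_Jseq (I : AdmissibleIdeal) (p : ℝ) : AdmissibleSeq I p (Jseq p) := by
  refine ⟨fun n => ⟨p - rseq n, p + rseq n, by linarith [rseq_pos n], rfl⟩,
    fun n => ⟨by linarith [rseq_pos n], by linarith [rseq_pos n]⟩, ?_⟩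
  refine Filter.mem_of_superset Filter.univ_mem (fun n _ => ⟨?_, ?_⟩)
  · rw [vol_Jseq]
    exact ENNReal.ofReal_pos.mpr (by linarith [rseq_pos n])
  · rw [vol_Jseq]
    rcases Nat.eq_zero_or_pos n with hn | hn
    · simp [hn]
      exact ENNReal.mul_lt_top (by norm_num) ENNReal.ofReal_lt_top
    · have hnp : (0:ℝ) < (n:ℝ) := by exact_mod_cast hn
      rw [← ENNReal.ofReal_natCast n, ← ENNReal.ofReal_inv_of_pos hnp]
      rw [ENNReal.ofReal_lt_ofReal_iff (by positivity)]
      rw [rseq, inv_eq_one_div, inv_eq_one_div, mul_one_div,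
        div_lt_div_iff₀ (by positivity) hnp]
      have h1 : (1:ℝ) ≤ (n:ℝ) := by exact_mod_cast hn
      nlinarith

lemma ratio_div_le_one (E J : Set ℝ) : volume (E ∩ J) / volume J ≤ 1 :=
  ENNReal.div_le_of_le_mul (by rw [one_mul]; exact measure_mono inter_subset_right)

lemma ratioSeq_le_one (E : Set ℝ) (J : ℕ → Set ℝ) (n : ℕ) : ratioSeq E J n ≤ 1 := by
  have := ENNReal.toReal_mono ENNReal.one_ne_top (ratio_div_le_one E (J n))
  simpa [ratioSeq] using this

lemma limsup_ratio_le_one (I : AdmissibleIdeal) (E : Set ℝ) (J : ℕ → Set ℝ) :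
    Filter.limsup (ratioSeq E J) I.filter ≤ 1 := by
  haveI := filter_neBot I
  refine Filter.limsup_le_of_le ?_ (Eventually.of_forall (ratioSeq_le_one E J))
  exact Filter.isCoboundedUnder_le_of_le I.filter (x := 0) (fun n => ENNReal.toReal_nonneg)

lemma bddAbove_densSet (I : AdmissibleIdeal) (p : ℝ) (E : Set ℝ) :
    BddAbove {l : ℝ | ∃ J : ℕ → Set ℝ, AdmissibleSeq I p J ∧
      l = Filter.limsup (ratioSeq E J) I.filter} := by
  refine ⟨1, fun l hl => ?_⟩
  obtain ⟨J, _, rfl⟩ := hl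
  exact limsup_ratio_le_one I E J

lemma upperIDensity_empty_lt_one (I : AdmissibleIdeal) (p : ℝ) :
    upperIDensity I p ∅ < 1 := by
  haveI := filter_neBot I
  have : upperIDensity I p ∅ ≤ 0 := by
    refine Real.sSup_le (fun l hl => ?_) le_rfl
    obtain ⟨J, _, rfl⟩ := hl
    have : ratioSeq ∅ J = fun _ => (0:ℝ) := by
      funext n; simp [ratioSeq, ENNReal.zero_div]
    rw [this, Filter.limsup_const]
  linarith

lemma upperIDensity_union_null (I : AdmissibleIdeal) (p : ℝ) {C : Set ℝ} (B : Set ℝ)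
    (hC : volume C = 0) : upperIDensity I p (C ∪ B) = upperIDensity I p B := by
  unfold upperIDensity
  congr 1
  have hr : ∀ J : ℕ → Set ℝ, ratioSeq (C ∪ B) J = ratioSeq B J := by
    intro J; funext n
    simp only [ratioSeq]
    congr 2
    rw [Set.union_inter_distrib_right, Set.union_comm]
    have h0 : volume (C ∩ J n) = 0 := measure_mono_null inter_subset_left hC
    refine le_antisymm ?_ (measure_mono subset_union_left)
    calc volume (B ∩ J n ∪ C ∩ J n) ≤ volume (B ∩ J n) + volume (C ∩ J n) :=
          measure_union_le _ _
      _ = volume (B ∩ J n) := by rw [h0, add_zero]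
  ext l
  constructor
  · rintro ⟨J, hJ, rfl⟩; exact ⟨J, hJ, by rw [hr]⟩
  · rintro ⟨J, hJ, rfl⟩; exact ⟨J, hJ, by rw [hr]⟩

lemma sparse_of_null (I : AdmissibleIdeal) (S : Set ℝ) (x : ℝ) (hS : MeasurableSet S)
    (h0 : volume S = 0) : ISparseAt I S x := by
  intro B _hB hBlt C hC
  have h1 : volume (C \ S) = 0 := hC.2.2 _ (hC.1.diff hS) subset_rfl
  have hC0 : volume C = 0 := by
    have : C ⊆ (C \ S) ∪ S := by
      intro y hy; by_cases hyS : y ∈ S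
      · exact Or.inr hyS
      · exact Or.inl ⟨hy, hyS⟩
    refine measure_mono_null this ?_
    exact measure_union_null h1 h0
  rw [upperIDensity_union_null I x B hC0]
  exact hBlt

/-- A measurable set is closed and discrete in the I-sparse set topology iff it is
Lebesgue null. -/
theorem sparseTop_closed_discrete_iff_null (I : AdmissibleIdeal) (A : Set ℝ)
    (hA : MeasurableSet A) :
    volume A = 0 ↔
      (Aᶜ ∈ sparseTop I ∧
        ∀ x : ℝ, ∃ U ∈ sparseTop I, x ∈ U ∧ U ∩ (A \ {x}) = ∅) := by
  constructor
  · intro h0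
    constructor
    · intro x _hx
      exact sparse_of_null I _ x hA.compl.compl (by rwa [compl_compl])
    · intro x
      refine ⟨(A \ {x})ᶜ, ?_, ?_, ?_⟩
      · intro y _hy
        refine sparse_of_null I _ y (hA.diff (measurableSet_singleton x)).compl.compl ?_
        rw [compl_compl]
        exact measure_mono_null diff_subset h0
      · simp
      · exact compl_inter_self _
  · rintro ⟨_hclosed, hdisc⟩
    by_contra h0
    haveI := filter_neBot I
    -- find a density point of A
    have hae := Besicovitch.ae_tendsto_measure_inter_div_of_measurableSet (volume : Measure ℝ) hA
    obtain ⟨x, hxA, hx⟩ := Measure.exists_mem_of_measure_ne_zero_of_ae h0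
      (ae_restrict_of_ae hae)
    rw [Set.indicator_of_mem hxA] at hx
    simp only [Pi.one_apply] at hx
    obtain ⟨U, hU, hxU, hUA⟩ := hdisc x
    have hsp : ISparseAt I Uᶜ x := hU x hxU
    set C := toMeasurable volume Uᶜ with hCdef
    have hcov : IsMeasurableCover C Uᶜ := by
      refine ⟨measurableSet_toMeasurable _ _, subset_toMeasurable _ _, fun F hF hFsub => ?_⟩
      have h2 : Uᶜ ∩ F = ∅ := by
        ext y; simp only [Set.mem_inter_iff, Set.mem_empty_iff_false, iff_false]
        rintro ⟨hy1, hy2⟩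
        exact (hFsub hy2).2 hy1
      have h3 : volume F = volume (C ∩ F) := by
        rw [Set.inter_eq_right.mpr (fun y hy => (hFsub hy).1)]
      rw [h3, hCdef, Measure.measure_toMeasurable_inter_of_sFinite hF Uᶜ, h2, measure_empty]
    have hlt := hsp ∅ MeasurableSet.empty (upperIDensity_empty_lt_one I x) C hcov
    rw [Set.union_empty] at hlt
    -- now show upperIDensity I x C ≥ 1
    have hAsub : ∀ y ∈ A, y ≠ x → y ∈ C := by
      intro y hy hyx
      refine subset_toMeasurable _ _ ?_
      intro hyU
      have : y ∈ U ∩ (A \ {x}) := ⟨hyU, hy, hyx⟩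
      rw [hUA] at this
      exact this
    set J := Jseq x with hJdef
    have hball : ∀ n, J n = Metric.closedBall x (rseq n) := by
      intro n; rw [hJdef, Jseq, Real.closedBall_eq_Icc]
    have hrt : Tendsto rseq atTop (𝓝[>] (0:ℝ)) := by
      have h1 : Tendsto (fun n : ℕ => 4 * (n:ℝ) + 4) atTop atTop := by
        apply tendsto_atTop_add_const_right
        exact (tendsto_natCast_atTop_atTop).const_mul_atTop (by norm_num)
      have h2 : Tendsto rseq atTop (𝓝 0) := h1.inv_tendsto_atTop
      exact tendsto_nhdsWithin_of_tendsto_nhds_of_eventually_within _ h2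
        (Eventually.of_forall (fun n => rseq_pos n))
    have htend0 : Tendsto (fun n => volume (A ∩ J n) / volume (J n)) atTop (𝓝 1) := by
      refine (hx.comp hrt).congr (fun n => ?_)
      simp [Function.comp, hball]
    have htendA : Tendsto (ratioSeq A J) atTop (𝓝 1) := by
      have h := (ENNReal.tendsto_toReal ENNReal.one_ne_top).comp htend0
      exact h
    have hlimA : Filter.limsup (ratioSeq A J) I.filter = 1 :=
      (htendA.mono_left (filter_le_atTop I)).limsup_eq
    have hle : ∀ n, ratioSeq A J n ≤ ratioSeq C J n := by
      intro n
      have hnum : volume (A ∩ J n) ≤ volume (C ∩ J n) := by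
        have hsub : A ∩ J n ⊆ (C ∩ J n) ∪ {x} := by
          rintro y ⟨hyA, hyJ⟩
          by_cases hyx : y = x
          · exact Or.inr (by simp [hyx])
          · exact Or.inl ⟨hAsub y hyA hyx, hyJ⟩
        calc volume (A ∩ J n) ≤ volume ((C ∩ J n) ∪ {x}) := measure_mono hsub
          _ ≤ volume (C ∩ J n) + volume ({x} : Set ℝ) := measure_union_le _ _
          _ = volume (C ∩ J n) := by rw [Real.volume_singleton, add_zero]
      have hdiv := ENNReal.div_le_div_right hnum (volume (J n))
      refine ENNReal.toReal_mono ?_ hdiv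
      exact ne_top_of_le_ne_top ENNReal.one_ne_top (ratio_div_le_one C (J n))
    have h1le : (1:ℝ) ≤ Filter.limsup (ratioSeq C J) I.filter := by
      rw [← hlimA]
      refine Filter.limsup_le_limsup (Eventually.of_forall hle) ?_ ?_
      · exact Filter.isCoboundedUnder_le_of_le I.filter (x := 0)
          (fun n => ENNReal.toReal_nonneg)
      · exact Filter.isBoundedUnder_of ⟨1, fun n => ratioSeq_le_one C J n⟩
    have hmem : Filter.limsup (ratioSeq C J) I.filter ∈
        {l : ℝ | ∃ J' : ℕ → Set ℝ, AdmissibleSeq I x J' ∧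
          l = Filter.limsup (ratioSeq C J') I.filter} :=
      ⟨J, admissible_Jseq I x, rfl⟩
    have := le_csSup (bddAbove_densSet I x C) hmem
    have : (1:ℝ) ≤ upperIDensity I x C := le_trans h1le this
    linarith
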